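/- The commutator subgroup of the group G equals {(0,0,k,0) : k ∈ ℤ}, i.e. the subgroup of G generated by all commutators g₁g₂g₁⁻¹g₂⁻¹ consists exactly of the elements whose first, second and fourth coordinates vanish. -/

import Mathlib

/-- The group `G`: underlying set ℤ⁴ with multiplication
`(m₁,n₁,k₁,ℓ₁)·(m₂,n₂,k₂,ℓ₂) = (m₁+m₂, n₁+n₂, k₁+k₂+m₁ℓ₂, ℓ₁+ℓ₂)`. -/
@[ext]
structure G where
  m : ℤ
  n : ℤ
  k : ℤ
  l : ℤ

instance : Mul G :=
  ⟨fun g₁ g₂ => ⟨g₁.m + g₂.m, g₁.n + g₂.n, g₁.k + g₂.k + g₁.m * g₂.l, g₁.l + g₂.l⟩⟩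

instance : One G := ⟨⟨0, 0, 0, 0⟩⟩

instance : Inv G := ⟨fun g => ⟨-g.m, -g.n, -g.k + g.m * g.l, -g.l⟩⟩

@[simp] lemma G.mul_m (g₁ g₂ : G) : (g₁ * g₂).m = g₁.m + g₂.m := rfl
@[simp] lemma G.mul_n (g₁ g₂ : G) : (g₁ * g₂).n = g₁.n + g₂.n := rfl
@[simp] lemma G.mul_k (g₁ g₂ : G) : (g₁ * g₂).k = g₁.k + g₂.k + g₁.m * g₂.l := rfl
@[simp] lemma G.mul_l (g₁ g₂ : G) : (g₁ * g₂).l = g₁.l + g₂.l := rfl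
@[simp] lemma G.one_m : (1 : G).m = 0 := rfl
@[simp] lemma G.one_n : (1 : G).n = 0 := rfl
@[simp] lemma G.one_k : (1 : G).k = 0 := rfl
@[simp] lemma G.one_l : (1 : G).l = 0 := rfl
@[simp] lemma G.inv_m (g : G) : g⁻¹.m = -g.m := rfl
@[simp] lemma G.inv_n (g : G) : g⁻¹.n = -g.n := rfl
@[simp] lemma G.inv_k (g : G) : g⁻¹.k = -g.k + g.m * g.l := rfl
@[simp] lemma G.inv_l (g : G) : g⁻¹.l = -g.l := rfl

instance : Group G where
  mul_assoc a b c := by ext <;> simp <;> ring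
  one_mul a := by ext <;> simp
  mul_one a := by ext <;> simp
  inv_mul_cancel a := by ext <;> simp


def Hsub : Subgroup G where
  carrier := {g : G | g.m = 0 ∧ g.n = 0 ∧ g.l = 0}
  mul_mem' := by rintro a b ⟨h1,h2,h3⟩ ⟨h4,h5,h6⟩; simp_all
  one_mem' := by simp
  inv_mem' := by rintro a ⟨h1,h2,h3⟩; simp_all

open scoped commutatorElement in
/-- The commutator subgroup of `G` is `{(0,0,k,0) : k ∈ ℤ}`. -/
theorem stmt3 :
    (commutator G : Set G) = {g : G | g.m = 0 ∧ g.n = 0 ∧ g.l = 0} := by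
  apply le_antisymm
  · rw [commutator, Subgroup.commutator_def]
    intro x hx
    refine Subgroup.closure_induction (fun g hg => ?_) ?_ (fun a b _ _ ha hb => Hsub.mul_mem ha hb) (fun a _ ha => Hsub.inv_mem ha) hx
    · obtain ⟨p, -, q, -, rfl⟩ := hg
      refine ⟨?_, ?_, ?_⟩ <;> simp [commutatorElement_def]
    · exact Hsub.one_mem
  · rintro ⟨m, n, k, l⟩ ⟨hm, hn, hl⟩
    simp only at hm hn hl
    subst hm; subst hn; subst hl
    have : (⟨0,0,k,0⟩ : G) = ⁅(⟨1,0,0,0⟩ : G), (⟨0,0,0,k⟩ : G)⁆ := by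
      ext <;> simp [commutatorElement_def]
    rw [this]
    exact Subgroup.commutator_mem_commutator (Subgroup.mem_top _) (Subgroup.mem_top _)
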